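/- Existence of an efficient competitive equilibrium: under the market-model assumptions (each W_i differentiable and concave, each K_i nonempty and compact, C_0 differentiable and convex), there exist points x_i* ∈ K_i for i = 1,…,N, a supply vector q^S* := Σ_i S_i x_i* ∈ ℝ^H, and a price vector p := ∇C_0(q^S*) ∈ ℝ^H such that: (a) for every i, x_i* maximizes x ↦ W_i(x) − ⟨p, S_i x⟩ over K_i; (b) q^S* maximizes q ↦ ⟨p, q⟩ − C_0(q) over ℝ^H; and (c) (x_1*,…,x_N*) maximizes the social welfare (x_1,…,x_N) ↦ Σ_i W_i(x_i) − C_0(Σ_i S_i x_i) over K_1 × ⋯ × K_N. In particular, ((x_i*)_i, q^S*, p) is a competitive equilibrium whose allocation is efficient. -/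

import Mathlib

open scoped RealInnerProductSpace

/-- The aggregation map `S_i`: sums the appliance blocks of a prosumer's consumption
vector, `S_i x = ∑_a x_{·,a}`, giving a vector of per-period totals. -/
noncomputable def aggr {a h' : Type*} [Fintype a] [Fintype h']
    (x : EuclideanSpace ℝ (a × h')) : EuclideanSpace ℝ h' :=
  WithLp.toLp 2 (fun t => ∑ i : a, x (i, t))

/-- The polyhedral constraint set `K = {x : A x ≤ h}` (componentwise inequalities). -/
def Kset {m' n' : Type*} [Fintype m'] [Fintype n'] (A : Matrix m' n' ℝ) (h : m' → ℝ) :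
    Set (EuclideanSpace ℝ n') := {x | ∀ l, ∑ j, A l j * x j ≤ h l}

section Aux

variable {a h' : Type*} [Fintype a] [Fintype h']

lemma aggr_add (x y : EuclideanSpace ℝ (a × h')) : aggr (x + y) = aggr x + aggr y := by
  ext t
  simp [aggr, PiLp.add_apply, Finset.sum_add_distrib]

lemma aggr_smul (c : ℝ) (x : EuclideanSpace ℝ (a × h')) : aggr (c • x) = c • aggr x := by
  ext t
  simp [aggr, PiLp.smul_apply, smul_eq_mul, Finset.mul_sum]

/-- `aggr` as a linear map. -/
noncomputable def aggrL : EuclideanSpace ℝ (a × h') →ₗ[ℝ] EuclideanSpace ℝ h' where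
  toFun := aggr
  map_add' := aggr_add
  map_smul' := aggr_smul

lemma aggr_continuous :
    Continuous (aggr : EuclideanSpace ℝ (a × h') → EuclideanSpace ℝ h') :=
  (aggrL : EuclideanSpace ℝ (a × h') →ₗ[ℝ] EuclideanSpace ℝ h').continuous_of_finiteDimensional

lemma aggr_sub (x y : EuclideanSpace ℝ (a × h')) : aggr (x - y) = aggr x - aggr y :=
  map_sub (aggrL (a := a) (h' := h')) x y

/-- Polyhedra are convex. -/
lemma Kset_convex {m' n' : Type*} [Fintype m'] [Fintype n'] (A : Matrix m' n' ℝ)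
    (h : m' → ℝ) : Convex ℝ (Kset A h) := by
  intro u hu v hv s t hs ht hst
  intro l
  have hu' := hu l
  have hv' := hv l
  have : ∑ j, A l j * (s • u + t • v) j = s * ∑ j, A l j * u j + t * ∑ j, A l j * v j := by
    rw [Finset.mul_sum, Finset.mul_sum, ← Finset.sum_add_distrib]
    refine Finset.sum_congr rfl fun j _ => ?_
    simp [PiLp.add_apply, PiLp.smul_apply, smul_eq_mul]
    ring
  rw [this]
  calc s * ∑ j, A l j * u j + t * ∑ j, A l j * v j ≤ s * h l + t * h l := by
        gcongr
      _ = h l := by rw [← add_mul, hst, one_mul]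

variable {F : Type*} [NormedAddCommGroup F] [InnerProductSpace ℝ F] [CompleteSpace F]

/-- If `t * c ≤ f (x + t • v) - f x` for small positive `t`, then `c ≤ ⟪∇f x, v⟫`. -/
lemma le_inner_gradient_of_slope (f : F → ℝ) (x v : F) (hf : DifferentiableAt ℝ f x) (c : ℝ)
    (hc : ∀ t : ℝ, t ∈ Set.Ioo (0:ℝ) 1 → t * c ≤ f (x + t • v) - f x) :
    c ≤ ⟪gradient f x, v⟫ := by
  have hγ : HasDerivAt (fun t : ℝ => x + t • v) v 0 := by
    simpa using ((hasDerivAt_id (0:ℝ)).smul_const v).const_add x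
  have hD : HasDerivAt (fun t : ℝ => f (x + t • v)) ⟪gradient f x, v⟫ 0 := by
    have hfd : HasFDerivAt f ((InnerProductSpace.toDual ℝ F) (gradient f x))
        ((fun t : ℝ => x + t • v) 0) := by
      simpa using hf.hasGradientAt.hasFDerivAt
    have := hfd.comp_hasDerivAt 0 hγ
    simpa [InnerProductSpace.toDual, Function.comp_def] using this
  have hT := hasDerivAt_iff_tendsto_slope.mp hD
  have hT' : Filter.Tendsto (slope (fun t : ℝ => f (x + t • v)) 0) (nhdsWithin 0 (Set.Ioi 0))
      (nhds ⟪gradient f x, v⟫) :=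
    hT.mono_left (nhdsWithin_mono _ fun t ht => ne_of_gt ht)
  refine ge_of_tendsto hT' ?_
  filter_upwards [Ioo_mem_nhdsGT_of_mem (Set.left_mem_Ico.mpr one_pos)] with t ht
  have h1 := hc t ht
  have ht0 : (0:ℝ) < t := ht.1
  rw [slope_def_field]
  simp only [zero_smul, add_zero, sub_zero]
  rw [le_div_iff₀ ht0]
  rw [mul_comm] at h1
  linarith

/-- If `f (x + t • v) - f x ≤ t * c` for small positive `t`, then `⟪∇f x, v⟫ ≤ c`. -/
lemma inner_gradient_le_of_slope (f : F → ℝ) (x v : F) (hf : DifferentiableAt ℝ f x) (c : ℝ)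
    (hc : ∀ t : ℝ, t ∈ Set.Ioo (0:ℝ) 1 → f (x + t • v) - f x ≤ t * c) :
    ⟪gradient f x, v⟫ ≤ c := by
  have := le_inner_gradient_of_slope (fun y => -f y) x v hf.neg (-c) ?_
  · have hg : gradient (fun y => -f y) x = -gradient f x := by
      have h1 : HasGradientAt (fun y => -f y) (-gradient f x) x := by
        rw [hasGradientAt_iff_hasFDerivAt]
        have := (hf.hasGradientAt.hasFDerivAt).neg
        simpa [Pi.neg_def] using this
      exact h1.gradient
    rw [hg, inner_neg_left] at this
    linarith
  · intro t ht
    have := hc t ht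
    simp only [mul_neg]
    linarith

end Aux

/-- Existence of an efficient competitive equilibrium: under the market-model assumptions
(each `W i` differentiable and concave, each polyhedral `K_i = {x : A_i x ≤ h_i}` nonempty
and compact, `C0` differentiable and convex), there exist `x* ∈ Π i, K_i`, a supply vector
`q^S* = ∑ i, S_i x_i*`, and a price `p = ∇C0(q^S*)` such that: (a) each `x_i*` maximizes
the payoff `y ↦ W_i(y) − ⟨p, S_i y⟩` over `K_i`; (b) `q^S*` maximizes the profit
`q ↦ ⟨p, q⟩ − C0(q)` over `ℝ^H`; and (c) `x*` maximizes the social welfare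
`y ↦ ∑ i W_i(y_i) − C0(∑ i S_i y_i)` over `Π i, K_i`. In particular `(x*, q^S*, p)` is a
competitive equilibrium whose allocation is efficient. -/
theorem exists_efficient_competitive_equilibrium
    (N H : ℕ) (nA : Fin N → ℕ) (m : Fin N → ℕ)
    (A : ∀ i, Matrix (Fin (m i)) (Fin (nA i) × Fin H) ℝ)
    (h : ∀ i, Fin (m i) → ℝ)
    (W : ∀ i, EuclideanSpace ℝ (Fin (nA i) × Fin H) → ℝ)
    (C0 : EuclideanSpace ℝ (Fin H) → ℝ)
    (hWdiff : ∀ i, Differentiable ℝ (W i))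
    (hWconc : ∀ i, ConcaveOn ℝ Set.univ (W i))
    (hKne : ∀ i, (Kset (A i) (h i)).Nonempty)
    (hKcpt : ∀ i, IsCompact (Kset (A i) (h i)))
    (hC0diff : Differentiable ℝ C0)
    (hC0conv : ConvexOn ℝ Set.univ C0) :
    ∃ (x : ∀ i, EuclideanSpace ℝ (Fin (nA i) × Fin H))
      (qS p : EuclideanSpace ℝ (Fin H)),
      (∀ i, x i ∈ Kset (A i) (h i)) ∧
      qS = ∑ i, aggr (x i) ∧
      p = gradient C0 qS ∧
      (∀ i, ∀ y ∈ Kset (A i) (h i),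
        W i y - ⟪p, aggr y⟫ ≤ W i (x i) - ⟪p, aggr (x i)⟫) ∧
      (∀ q : EuclideanSpace ℝ (Fin H), ⟪p, q⟫ - C0 q ≤ ⟪p, qS⟫ - C0 qS) ∧
      (∀ y : ∀ i, EuclideanSpace ℝ (Fin (nA i) × Fin H),
        (∀ i, y i ∈ Kset (A i) (h i)) →
        ∑ i, W i (y i) - C0 (∑ i, aggr (y i)) ≤ ∑ i, W i (x i) - C0 qS) := by
  classical
  set K : Set (∀ i, EuclideanSpace ℝ (Fin (nA i) × Fin H)) :=
    Set.pi Set.univ (fun i => Kset (A i) (h i)) with hK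
  have hKcompact : IsCompact K := isCompact_univ_pi hKcpt
  have hKnonempty : K.Nonempty :=
    ⟨fun i => (hKne i).some, fun i _ => (hKne i).some_mem⟩
  set F : (∀ i, EuclideanSpace ℝ (Fin (nA i) × Fin H)) → ℝ :=
    fun y => ∑ i, W i (y i) - C0 (∑ i, aggr (y i)) with hF
  have hFcont : Continuous F := by
    apply Continuous.sub
    · exact continuous_finset_sum _ fun i _ => (hWdiff i).continuous.comp (continuous_apply i)
    · exact hC0diff.continuous.comp
        (continuous_finset_sum _ fun i _ => aggr_continuous.comp (continuous_apply i))
  obtain ⟨x, hxK, hmax⟩ := hKcompact.exists_isMaxOn hKnonempty hFcont.continuousOn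
  have hxKi : ∀ i, x i ∈ Kset (A i) (h i) := fun i => hxK i (Set.mem_univ i)
  set qS : EuclideanSpace ℝ (Fin H) := ∑ i, aggr (x i) with hqS
  set p : EuclideanSpace ℝ (Fin H) := gradient C0 qS with hp
  have hwelfare : ∀ y : ∀ i, EuclideanSpace ℝ (Fin (nA i) × Fin H),
      (∀ i, y i ∈ Kset (A i) (h i)) →
      ∑ i, W i (y i) - C0 (∑ i, aggr (y i)) ≤ ∑ i, W i (x i) - C0 qS := by
    intro y hy
    have : y ∈ K := fun i _ => hy i
    exact hmax this
  refine ⟨x, qS, p, hxKi, hqS, hp, ?_, ?_, hwelfare⟩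
  · -- (a) each prosumer's payoff is maximized
    intro i₀ y hy
    set v : EuclideanSpace ℝ (Fin H) := aggr y - aggr (x i₀) with hv
    have hkey : W i₀ y - W i₀ (x i₀) ≤ ⟪p, v⟫ := by
      refine le_inner_gradient_of_slope C0 qS v (hC0diff qS) _ ?_
      intro t ht
      obtain ⟨ht0, ht1⟩ := ht
      set z : ∀ i, EuclideanSpace ℝ (Fin (nA i) × Fin H) :=
        Function.update x i₀ (x i₀ + t • (y - x i₀)) with hz
      have hzi₀ : z i₀ = (1 - t) • x i₀ + t • y := by
        rw [hz, Function.update_self]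
        module
      have hzmem : ∀ i, z i ∈ Kset (A i) (h i) := by
        intro i
        rcases eq_or_ne i i₀ with rfl | hne
        · rw [hzi₀]
          exact Kset_convex (A i) (h i) (hxKi i) hy (by linarith) (le_of_lt ht0) (by ring)
        · rw [hz, Function.update_of_ne hne]
          exact hxKi i
      have hFz := hwelfare z hzmem
      -- sums split at i₀
      have hsumW : ∑ i, W i (z i) =
          W i₀ (z i₀) + ∑ i ∈ Finset.univ.erase i₀, W i (x i) := by
        rw [← Finset.add_sum_erase _ _ (Finset.mem_univ i₀)]
        congr 1
        refine Finset.sum_congr rfl fun j hj => ?_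
        rw [hz, Function.update_of_ne (Finset.ne_of_mem_erase hj)]
      have hsumWx : ∑ i, W i (x i) =
          W i₀ (x i₀) + ∑ i ∈ Finset.univ.erase i₀, W i (x i) :=
        (Finset.add_sum_erase _ _ (Finset.mem_univ i₀)).symm
      have hsumA : ∑ i, aggr (z i) = qS + t • v := by
        rw [← Finset.add_sum_erase _ (fun i => aggr (z i)) (Finset.mem_univ i₀)]
        have h1 : ∑ i ∈ Finset.univ.erase i₀, aggr (z i) =
            ∑ i ∈ Finset.univ.erase i₀, aggr (x i) := by
          refine Finset.sum_congr rfl fun j hj => ?_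
          rw [hz, Function.update_of_ne (Finset.ne_of_mem_erase hj)]
        rw [h1]
        have h2 : qS = aggr (x i₀) + ∑ i ∈ Finset.univ.erase i₀, aggr (x i) :=
          (Finset.add_sum_erase _ _ (Finset.mem_univ i₀)).symm
        have h3 : aggr (z i₀) = aggr (x i₀) + t • v := by
          rw [hz, Function.update_self, aggr_add, aggr_smul, aggr_sub, hv]
        rw [h3, h2]
        abel
      have hconc := (hWconc i₀).2 (Set.mem_univ (x i₀)) (Set.mem_univ y)
        (by linarith : (0:ℝ) ≤ 1 - t) (le_of_lt ht0) (by ring)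
      rw [← hzi₀] at hconc
      simp only [smul_eq_mul] at hconc
      -- from welfare maximality
      rw [hsumW, hsumWx, hsumA] at hFz
      have : W i₀ (z i₀) - W i₀ (x i₀) ≤ C0 (qS + t • v) - C0 qS := by linarith
      nlinarith [this, hconc]
    have hinner : ⟪p, v⟫ = ⟪p, aggr y⟫ - ⟪p, aggr (x i₀)⟫ := by
      rw [hv, inner_sub_right]
    linarith [hkey, hinner.le, hinner.ge]
  · -- (b) the utility company's profit is maximized
    intro q
    have hkey : ⟪p, q - qS⟫ ≤ C0 q - C0 qS := by
      refine inner_gradient_le_of_slope C0 qS (q - qS) (hC0diff qS) _ ?_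
      intro t ht
      obtain ⟨ht0, ht1⟩ := ht
      have hconv := hC0conv.2 (Set.mem_univ qS) (Set.mem_univ q)
        (by linarith : (0:ℝ) ≤ 1 - t) (le_of_lt ht0) (by ring)
      have heq : qS + t • (q - qS) = (1 - t) • qS + t • q := by module
      rw [heq]
      simp only [smul_eq_mul] at hconv
      nlinarith [hconv]
    have hinner : ⟪p, q - qS⟫ = ⟪p, q⟫ - ⟪p, qS⟫ := inner_sub_right _ _ _
    linarith [hinner.le, hinner.ge]
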